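/- Let k ≥ 2 be an integer, let F_k be the free group on k generators, and for g ∈ F_k let |g| denote the length of the reduced word representing g. If r ≥ 2 is an even integer, then the sphere S_r = {g ∈ F_k : |g| = r} is not a right tile of F_k: there is no set C ⊆ F_k such that the left translates c·S_r, c ∈ C, are pairwise disjoint and cover F_k. -/

import Mathlib

namespace StmtAux

open FreeGroup List

variable {α : Type*} [DecidableEq α]

/-- The "no cancellation" relation between successive letters of a word. -/
def Ok (a b : α × Bool) : Prop := ¬(a.1 = b.1 ∧ a.2 = !b.2)

lemma chain'_of_reduce_eq {L : List (α × Bool)} (h : FreeGroup.reduce L = L) :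
    L.Chain' Ok := by
  induction L with
  | nil => exact List.isChain_nil
  | cons x X ih =>
    rw [FreeGroup.reduce.cons] at h
    have hred : Red X (FreeGroup.reduce X) := FreeGroup.reduce.red
    have hlen : (FreeGroup.reduce X).length ≤ X.length := hred.length_le
    rcases hY : FreeGroup.reduce X with _ | ⟨hd, tl⟩
    · rw [hY] at h
      have h' : [x] = x :: X := h
      have hXnil : X = [] := by injection h' with _ h2; exact h2.symm
      subst hXnil; exact List.isChain_singleton _
    · rw [hY] at h hlen
      have h' : (if x.1 = hd.1 ∧ x.2 = !hd.2 then tl else x :: hd :: tl) = x :: X := h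
      by_cases hc : x.1 = hd.1 ∧ x.2 = !hd.2
      · rw [if_pos hc] at h'
        exfalso
        have hl2 : tl.length = X.length + 1 := by rw [h']; simp
        simp only [List.length_cons] at hlen
        omega
      · rw [if_neg hc] at h'
        have hX : X = hd :: tl := by injection h' with _ h2; exact h2.symm
        have hrX : FreeGroup.reduce X = X := by rw [hY, hX]
        have hchain := ih hrX
        rw [hX] at hchain ⊢
        exact List.isChain_cons_cons.mpr ⟨hc, hchain⟩

lemma reduce_eq_of_chain' {L : List (α × Bool)} (h : L.Chain' Ok) :
    FreeGroup.reduce L = L := by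
  induction L with
  | nil => rfl
  | cons x X ih =>
    have hX := ih h.tail
    rw [FreeGroup.reduce.cons, hX]
    cases X with
    | nil => rfl
    | cons hd tl =>
      have hok : Ok x hd := (List.isChain_cons_cons.mp h).1
      simp only [if_neg hok]

lemma norm_mk_of_chain' {L : List (α × Bool)} (h : L.Chain' Ok) :
    FreeGroup.norm (FreeGroup.mk L) = L.length := by
  have : (FreeGroup.mk L).toWord = L := by rw [FreeGroup.toWord_mk, reduce_eq_of_chain' h]
  show (FreeGroup.mk L).toWord.length = L.length
  rw [this]

omit [DecidableEq α] in
lemma ok_self (y : α × Bool) : Ok y y := by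
  rintro ⟨-, h2⟩
  exact (Bool.eq_not_self y.2).mp h2

/-- Key construction: if `norm w = 2*s` with `s ≥ 1` and there are at least two
generators, then there is an element `a` at distance `2*s` from both `1` and `w`. -/
lemma exists_midpointish {k : ℕ} (hk : 2 ≤ k) (s : ℕ) (hs : 1 ≤ s)
    (w : FreeGroup (Fin k)) (hw : FreeGroup.norm w = 2 * s) :
    ∃ a : FreeGroup (Fin k), FreeGroup.norm a = 2 * s ∧
      FreeGroup.norm (w⁻¹ * a) = 2 * s := by
  classical
  set L : List (Fin k × Bool) := w.toWord with hLdef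
  have hLred : FreeGroup.reduce L = L := FreeGroup.reduce_toWord w
  have hC : L.Chain' Ok := chain'_of_reduce_eq hLred
  have hLlen : L.length = 2 * s := hw
  set u : List (Fin k × Bool) := L.take s with hu
  set v : List (Fin k × Bool) := L.drop s with hv
  have hulen : u.length = s := by
    rw [hu, List.length_take, hLlen]; omega
  have hvlen : v.length = s := by
    rw [hv, List.length_drop, hLlen]; omega
  have hune : u ≠ [] := by
    intro h; rw [h] at hulen; simp at hulen; omega
  have hvne : v ≠ [] := by
    intro h; rw [h] at hvlen; simp at hvlen; omega
  have huv : u ++ v = L := List.take_append_drop s L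
  -- forbidden letters
  set ℓ₁ : Fin k × Bool := ((u.getLast hune).1, !(u.getLast hune).2) with hℓ₁
  set ℓ₂ : Fin k × Bool := v.head hvne with hℓ₂
  -- choose a letter avoiding both
  obtain ⟨y, hy1, hy2⟩ : ∃ y : Fin k × Bool, y ≠ ℓ₁ ∧ y ≠ ℓ₂ := by
    by_cases h12 : ℓ₁.1 = ℓ₂.1
    · have h1k : 1 < k := lt_of_lt_of_le one_lt_two hk
      obtain ⟨j, hj⟩ : ∃ j : Fin k, j ≠ ℓ₁.1 :=
        Fintype.exists_ne_of_one_lt_card (by simpa using h1k) ℓ₁.1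
      refine ⟨(j, true), ?_, ?_⟩
      · intro h; exact hj (congrArg Prod.fst h)
      · intro h; exact hj ((congrArg Prod.fst h).trans h12.symm)
    · refine ⟨(ℓ₁.1, !ℓ₁.2), ?_, ?_⟩
      · intro h
        have h2 := congrArg Prod.snd h
        simp at h2
      · intro h
        apply h12
        have h1 := congrArg Prod.fst h
        simpa using h1
  set T : List (Fin k × Bool) := List.replicate s y with hT
  have hTne : T ≠ [] := by
    rw [hT]; simp; omega
  have hTchain : T.Chain' Ok := List.isChain_replicate_of_rel s (ok_self y)
  have hTlen : T.length = s := by rw [hT]; simp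
  have hThead : T.head? = some y := by
    rw [hT]; cases s with
    | zero => omega
    | succ n => simp [List.replicate_succ]
  -- chain for u ++ T
  have huchain : u.Chain' Ok := hC.prefix ⟨v, huv⟩
  have hvchain : v.Chain' Ok := hC.suffix ⟨u, huv⟩
  have hok₁ : Ok (u.getLast hune) y := by
    rintro ⟨h1, h2⟩
    apply hy1
    rw [hℓ₁, Prod.ext_iff]
    exact ⟨h1.symm, by simp [h2]⟩
  have hchain₁ : (u ++ T).Chain' Ok := by
    show List.IsChain _ _
    rw [List.isChain_append]
    refine ⟨huchain, hTchain, ?_⟩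
    intro a ha b hb
    rw [List.getLast?_eq_getLast (l := u) hune] at ha
    rw [hThead] at hb
    obtain rfl : a = u.getLast hune := by injection ha with h; exact h.symm
    obtain rfl : b = y := by injection hb with h; exact h.symm
    exact hok₁
  -- chain for invRev v ++ T
  have hinvchain : (FreeGroup.invRev v).Chain' Ok := by
    rw [FreeGroup.invRev]
    show List.IsChain _ _
    rw [List.isChain_reverse]
    rw [List.isChain_map]
    apply hvchain.imp
    rintro a b hab ⟨h1, h2⟩
    apply hab
    constructor
    · exact h1.symm
    · simp only [Bool.not_not] at h2
      rw [h2]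
  have hinvlast : (FreeGroup.invRev v).getLast? = some (ℓ₂.1, !ℓ₂.2) := by
    rw [FreeGroup.invRev, List.getLast?_reverse, List.head?_map]
    rw [List.head?_eq_head hvne]
    rfl
  have hok₂ : Ok ((ℓ₂.1, !ℓ₂.2) : Fin k × Bool) y := by
    rintro ⟨h1, h2⟩
    apply hy2
    rw [Prod.ext_iff]
    have h2' : ℓ₂.2 = y.2 := by
      have : (!ℓ₂.2) = !y.2 := h2
      simpa using this
    exact ⟨h1.symm, h2'.symm⟩
  have hchain₂ : (FreeGroup.invRev v ++ T).Chain' Ok := by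
    show List.IsChain _ _
    rw [List.isChain_append]
    refine ⟨hinvchain, hTchain, ?_⟩
    intro a ha b hb
    rw [hinvlast] at ha
    rw [hThead] at hb
    obtain rfl : a = (ℓ₂.1, !ℓ₂.2) := by injection ha with h; exact h.symm
    obtain rfl : b = y := by injection hb with h; exact h.symm
    exact hok₂
  -- the element a
  refine ⟨FreeGroup.mk (u ++ T), ?_, ?_⟩
  · rw [norm_mk_of_chain' hchain₁]
    simp [hulen, hTlen]; omega
  · have hwmk : w = FreeGroup.mk u * FreeGroup.mk v := by
      rw [FreeGroup.mul_mk, huv, hLdef, FreeGroup.mk_toWord]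
    have hmkT : FreeGroup.mk (u ++ T) = FreeGroup.mk u * FreeGroup.mk T :=
      (FreeGroup.mul_mk).symm
    have : w⁻¹ * FreeGroup.mk (u ++ T) = (FreeGroup.mk v)⁻¹ * FreeGroup.mk T := by
      rw [hwmk, hmkT]; group
    rw [this, FreeGroup.inv_mk, FreeGroup.mul_mk, norm_mk_of_chain' hchain₂]
    rw [List.length_append, FreeGroup.invRev_length, hvlen, hTlen]; omega

end StmtAux

/- STATEMENT 18: For `k ≥ 2` and an even integer `r ≥ 2`, the sphere
`S_r = {g ∈ F_k : |g| = r}` (with `|g|` the reduced word length) is not a right tile of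
the free group `F_k`: no family of left translates partitions `F_k`. -/
theorem stmt_18 (k r : ℕ) (hk : 2 ≤ k) (hr : 2 ≤ r) (hre : Even r) :
    ¬ ∃ C : Set (FreeGroup (Fin k)),
        (C.PairwiseDisjoint fun c => (fun s => c * s) ''
          {h : FreeGroup (Fin k) | FreeGroup.norm h = r}) ∧
        ⋃ c ∈ C, (fun s => c * s) ''
          {h : FreeGroup (Fin k) | FreeGroup.norm h = r} = Set.univ := by
  rintro ⟨C, hdisj, hcov⟩
  obtain ⟨s, hs⟩ := hre
  have hs' : 1 ≤ s := by omega
  have hr2s : r = 2 * s := by omega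
  -- the identity is covered by some c₀ ∈ C
  have h1 : (1 : FreeGroup (Fin k)) ∈ ⋃ c ∈ C, (fun s => c * s) ''
      {h : FreeGroup (Fin k) | FreeGroup.norm h = r} := by
    rw [hcov]; trivial
  rw [Set.mem_iUnion₂] at h1
  obtain ⟨c₀, hc₀C, h1'⟩ := h1
  -- c₀ itself is covered by some z ∈ C
  have h2 : c₀ ∈ ⋃ c ∈ C, (fun s => c * s) ''
      {h : FreeGroup (Fin k) | FreeGroup.norm h = r} := by
    rw [hcov]; trivial
  rw [Set.mem_iUnion₂] at h2
  obtain ⟨z, hzC, hz⟩ := h2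
  obtain ⟨hw, hhw, hzw⟩ := hz
  -- so norm (z⁻¹ * c₀) = r
  have hwnorm : FreeGroup.norm (z⁻¹ * c₀) = r := by
    have : z⁻¹ * c₀ = hw := by rw [← hzw]; group
    rw [this]; exact hhw
  have hzne : z ≠ c₀ := by
    intro h
    rw [h] at hwnorm
    simp at hwnorm
    omega
  -- construct a point at distance r from both z and c₀
  obtain ⟨a, hanorm, hwa⟩ := StmtAux.exists_midpointish hk s hs' (z⁻¹ * c₀)
    (by rw [hwnorm, hr2s])
  set g : FreeGroup (Fin k) := z * a with hg
  have hgz : g ∈ (fun s => z * s) '' {h : FreeGroup (Fin k) | FreeGroup.norm h = r} :=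
    ⟨a, by simp only [Set.mem_setOf_eq, hanorm, hr2s], rfl⟩
  have hgc₀ : g ∈ (fun s => c₀ * s) '' {h : FreeGroup (Fin k) | FreeGroup.norm h = r} := by
    refine ⟨(z⁻¹ * c₀)⁻¹ * a, by simp only [Set.mem_setOf_eq, hwa, hr2s], ?_⟩
    show c₀ * ((z⁻¹ * c₀)⁻¹ * a) = g
    rw [hg]; group
  have hdis := hdisj hzC hc₀C hzne
  exact Set.disjoint_left.mp hdis hgz hgc₀
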